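/- Let α_s, α_t be complex numbers with α_t ≠ 0, and let Ẑ, â be estimates satisfying |Ẑ − α_s α_t*| ≤ 2ε and |â − |α_t|| ≤ √ε, with â > 0 and |α_t| > √ε. Then the estimator α̂_s := Ẑ/â satisfies |α̂_s − e^{−iθ}α_s| ≤ (2√ε·√ε + |α_s|√ε)/â ≤ 3√ε/(|α_t| − √ε), where θ = arg(α_t), provided |α_s| ≤ 1 and ε ≤ 1. -/

import Mathlib

open Matrix BigOperators
open scoped Kronecker ComplexOrder

noncomputable def pauli1 : Fin 4 → Matrix (Fin 2) (Fin 2) ℂ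
  | 0 => 1
  | 1 => !![0, 1; 1, 0]
  | 2 => !![0, -Complex.I; Complex.I, 0]
  | 3 => !![1, 0; 0, -1]

/-- The n-qubit Pauli operator indexed by `s : Fin n → Fin 4`, realized as the
tensor product of single-qubit Pauli matrices (entrywise product formula). -/
noncomputable def pauli {n : ℕ} (s : Fin n → Fin 4) :
    Matrix (Fin n → Fin 2) (Fin n → Fin 2) ℂ :=
  Matrix.of fun i j => ∏ k, pauli1 (s k) (i k) (j k)

/-- The Pauli coefficient `α_s = 2^{-n} Tr(A σ^s)`. -/
noncomputable def pauliCoeff {n : ℕ} (A : Matrix (Fin n → Fin 2) (Fin n → Fin 2) ℂ)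
    (s : Fin n → Fin 4) : ℂ :=
  (A * pauli s).trace / 2 ^ n

/-- Operator norm (largest singular value) of a matrix. -/
noncomputable def opNorm {m : Type*} [Fintype m] [DecidableEq m]
    (A : Matrix m m ℂ) : ℝ :=
  ‖Matrix.toEuclideanCLM (𝕜 := ℂ) A‖

/-- Trace norm `‖A‖₁ = Tr √(AᴴA)`. -/
noncomputable def traceNorm {m : Type*} [Fintype m] [DecidableEq m]
    (A : Matrix m m ℂ) : ℝ :=
  (((Matrix.posSemidef_conjTranspose_mul_self A).isHermitian.eigenvectorUnitary : Matrix m m ℂ) *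
    Matrix.diagonal (((↑) : ℝ → ℂ) ∘ Real.sqrt ∘
      (Matrix.posSemidef_conjTranspose_mul_self A).isHermitian.eigenvalues) *
    (star (Matrix.posSemidef_conjTranspose_mul_self A).isHermitian.eigenvectorUnitary :
      Matrix m m ℂ)).trace.re

/-- Error propagation for the ratio-based Pauli coefficient
estimator `α̂_s = Ẑ/â`. -/
theorem ratio_estimator_error (αs αt Z : ℂ) (ε a : ℝ)
    (hαt : αt ≠ 0)
    (hZ : ‖Z - αs * (starRingEnd ℂ) αt‖ ≤ 2 * ε)
    (ha : |a - ‖αt‖| ≤ Real.sqrt ε)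
    (hapos : 0 < a)
    (hαtbig : Real.sqrt ε < ‖αt‖)
    (hαs : ‖αs‖ ≤ 1) (hε0 : 0 ≤ ε) (hε1 : ε ≤ 1) :
    ‖Z / (a : ℂ) - Complex.exp (-(Complex.I * (αt.arg : ℂ))) * αs‖
        ≤ (2 * Real.sqrt ε * Real.sqrt ε + ‖αs‖ * Real.sqrt ε) / a ∧
    (2 * Real.sqrt ε * Real.sqrt ε + ‖αs‖ * Real.sqrt ε) / a
        ≤ 3 * Real.sqrt ε / (‖αt‖ - Real.sqrt ε) := by

  set r := Real.sqrt ε with hr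
  have hr0 : 0 ≤ r := Real.sqrt_nonneg ε
  have hA : (0:ℝ) < ‖αt‖ := norm_pos_iff.mpr hαt
  have hkey : Complex.exp (-(Complex.I * (αt.arg : ℂ))) =
      (starRingEnd ℂ) αt / (‖αt‖ : ℂ) := by
    have h := Complex.norm_mul_exp_arg_mul_I αt
    have h2 := congrArg (starRingEnd ℂ) h
    simp only [_root_.map_mul, ← Complex.exp_conj, Complex.conj_ofReal] at h2
    field_simp
    rw [show -(Complex.I * (αt.arg : ℂ)) = (αt.arg : ℂ) * (starRingEnd ℂ) Complex.I by
      simp [Complex.conj_I]; ring]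
    rw [mul_comm] at h2
    exact h2
  have hAne : (‖αt‖ : ℂ) ≠ 0 := by exact_mod_cast hA.ne'
  have hane : (a : ℂ) ≠ 0 := by exact_mod_cast hapos.ne'
  have hdecomp : Z / (a : ℂ) - Complex.exp (-(Complex.I * (αt.arg : ℂ))) * αs
      = (Z - αs * (starRingEnd ℂ) αt) / (a : ℂ)
        + αs * (starRingEnd ℂ) αt * (1 / (a : ℂ) - 1 / (‖αt‖ : ℂ)) := by
    rw [hkey]; field_simp; ring
  have habs2 : ‖1 / (a : ℂ) - 1 / (‖αt‖ : ℂ)‖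
      ≤ r / (a * ‖αt‖) := by
    have : (1 / (a : ℂ) - 1 / (‖αt‖ : ℂ))
        = ((‖αt‖ : ℂ) - a) / (a * ‖αt‖) := by field_simp
    rw [this]
    rw [norm_div]
    have h1 : ‖(‖αt‖ : ℂ) - (a:ℂ)‖ ≤ r := by
      rw [← Complex.ofReal_sub, Complex.norm_real, Real.norm_eq_abs, abs_sub_comm]
      exact ha
    have h2 : ‖(a:ℂ) * (‖αt‖ : ℂ)‖ = a * ‖αt‖ := by
      rw [← Complex.ofReal_mul, Complex.norm_real, Real.norm_eq_abs, abs_of_pos (by positivity)]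
    rw [h2]
    exact div_le_div_of_nonneg_right h1 (by positivity) |>.trans le_rfl
  have hmain : ‖Z / (a : ℂ) - Complex.exp (-(Complex.I * (αt.arg : ℂ))) * αs‖
      ≤ (2 * r * r + ‖αs‖ * r) / a := by
    rw [hdecomp]
    calc ‖_‖ ≤ ‖(Z - αs * (starRingEnd ℂ) αt) / (a : ℂ)‖
          + ‖αs * (starRingEnd ℂ) αt * (1 / (a : ℂ) - 1 / (‖αt‖ : ℂ))‖ :=
        norm_add_le _ _
      _ ≤ 2 * ε / a + ‖αs‖ * ‖αt‖ * (r / (a * ‖αt‖)) := by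
          gcongr
          · rw [norm_div, Complex.norm_real, Real.norm_eq_abs, abs_of_pos hapos]
            gcongr
          · rw [norm_mul, norm_mul, Complex.norm_conj]
            gcongr
      _ = (2 * ε + ‖αs‖ * r) / a := by field_simp
      _ = (2 * r * r + ‖αs‖ * r) / a := by
          rw [hr, show (2:ℝ) * √ε * √ε = 2 * ε by
            rw [mul_assoc, Real.mul_self_sqrt hε0]]
  refine ⟨hmain, ?_⟩
  have hrle1 : r ≤ 1 := by
    rw [hr]; rw [show (1:ℝ) = Real.sqrt 1 by simp]; exact Real.sqrt_le_sqrt hε1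
  have hage : ‖αt‖ - r ≤ a := by
    have := abs_le.mp ha
    linarith [this.1]
  have hpos2 : 0 < ‖αt‖ - r := by linarith
  have hnum : 2 * r * r + ‖αs‖ * r ≤ 3 * r := by nlinarith
  calc (2 * r * r + ‖αs‖ * r) / a ≤ (3 * r) / a := by
        gcongr
    _ ≤ 3 * r / (‖αt‖ - r) := by gcongr
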